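/- Let m ≥ 0 and ξ ∈ ℝ³ with λ₊(ξ)² + m·λ₊(ξ) > 0 (i.e. ξ ≠ 0 or m > 0). Then the matrix U_m(ξ) is unitary and diagonalizes the Dirac symbol: U_m(ξ)* · M_m(ξ) · U_m(ξ) = diag(λ₊(ξ), λ₊(ξ), λ₋(ξ), λ₋(ξ)). -/
import Mathlib


open Complex Matrix

noncomputable section

/-- The 4×4 Dirac matrix `α₁` built from the Pauli matrix `σ₁ = !![0,1;1,0]`. -/
def diracAlpha1 : Matrix (Fin 4) (Fin 4) ℂ :=
  !![0, 0, 0, 1;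
     0, 0, 1, 0;
     0, 1, 0, 0;
     1, 0, 0, 0]

/-- The 4×4 Dirac matrix `α₂` built from the Pauli matrix `σ₂ = !![0,-I;I,0]`. -/
def diracAlpha2 : Matrix (Fin 4) (Fin 4) ℂ :=
  !![0, 0, 0, -I;
     0, 0, I, 0;
     0, -I, 0, 0;
     I, 0, 0, 0]

/-- The 4×4 Dirac matrix `α₃` built from the Pauli matrix `σ₃ = !![1,0;0,-1]`. -/
def diracAlpha3 : Matrix (Fin 4) (Fin 4) ℂ :=
  !![0, 0, 1, 0;
     0, 0, 0, -1;
     1, 0, 0, 0;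
     0, -1, 0, 0]

/-- The 4×4 Dirac matrix `β`. -/
def diracBeta : Matrix (Fin 4) (Fin 4) ℂ :=
  !![1, 0, 0, 0;
     0, 1, 0, 0;
     0, 0, -1, 0;
     0, 0, 0, -1]

/-- The free Dirac symbol `M_m(ξ) = ξ₁α₁ + ξ₂α₂ + ξ₃α₃ + mβ`. -/
def diracSymbol (m : ℝ) (ξ : EuclideanSpace ℝ (Fin 3)) : Matrix (Fin 4) (Fin 4) ℂ :=
  (ξ 0 : ℂ) • diracAlpha1 + (ξ 1 : ℂ) • diracAlpha2 + (ξ 2 : ℂ) • diracAlpha3 +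
    (m : ℂ) • diracBeta

/-- `λ₊(ξ) = √(|ξ|² + m²)`. -/
def lambdaPlus (m : ℝ) (ξ : EuclideanSpace ℝ (Fin 3)) : ℝ :=
  Real.sqrt (‖ξ‖ ^ 2 + m ^ 2)

/-- The Foldy–Wouthuysen–Tani matrix
`U_m(ξ) = (√2 √(λ₊² + mλ₊))⁻¹ ((λ₊ + m) I₄ + β (ξ·α))`, written out explicitly. -/
def diracU (m : ℝ) (ξ : EuclideanSpace ℝ (Fin 3)) : Matrix (Fin 4) (Fin 4) ℂ :=
  (((Real.sqrt 2 * Real.sqrt (lambdaPlus m ξ ^ 2 + m * lambdaPlus m ξ))⁻¹ : ℝ) : ℂ) •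
    !![((lambdaPlus m ξ + m : ℝ) : ℂ), 0, -(ξ 2 : ℂ), -(ξ 0 : ℂ) + I * (ξ 1 : ℂ);
       0, ((lambdaPlus m ξ + m : ℝ) : ℂ), -(ξ 0 : ℂ) - I * (ξ 1 : ℂ), (ξ 2 : ℂ);
       (ξ 2 : ℂ), (ξ 0 : ℂ) - I * (ξ 1 : ℂ), ((lambdaPlus m ξ + m : ℝ) : ℂ), 0;
       (ξ 0 : ℂ) + I * (ξ 1 : ℂ), -(ξ 2 : ℂ), 0, ((lambdaPlus m ξ + m : ℝ) : ℂ)]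

set_option maxHeartbeats 2000000

/-- for `m ≥ 0` and `ξ` with `λ₊(ξ)² + m λ₊(ξ) > 0` the
Foldy–Wouthuysen–Tani matrix `U_m(ξ)` is unitary and diagonalizes the Dirac symbol:
`U_m(ξ)* M_m(ξ) U_m(ξ) = diag(λ₊, λ₊, λ₋, λ₋)`. -/
theorem diracU_unitary_diagonalizes (m : ℝ) (hm : 0 ≤ m) (ξ : EuclideanSpace ℝ (Fin 3))
    (hpos : 0 < lambdaPlus m ξ ^ 2 + m * lambdaPlus m ξ) :
    (diracU m ξ)ᴴ * diracU m ξ = 1 ∧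
    diracU m ξ * (diracU m ξ)ᴴ = 1 ∧
    (diracU m ξ)ᴴ * diracSymbol m ξ * diracU m ξ
      = Matrix.diagonal
          ![((lambdaPlus m ξ : ℝ) : ℂ), ((lambdaPlus m ξ : ℝ) : ℂ),
            (((-lambdaPlus m ξ : ℝ) : ℂ)), (((-lambdaPlus m ξ : ℝ) : ℂ))] := by

  set l := lambdaPlus m ξ with hldef
  set r : ℝ := (Real.sqrt 2 * Real.sqrt (l ^ 2 + m * l))⁻¹ with hrdef
  have hl0 : 0 ≤ l := Real.sqrt_nonneg _
  have hnorm : ‖ξ‖ ^ 2 = (ξ 0) ^ 2 + (ξ 1) ^ 2 + (ξ 2) ^ 2 := by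
    rw [EuclideanSpace.norm_eq, Real.sq_sqrt (by positivity)]
    simp [Fin.sum_univ_three, Real.norm_eq_abs, sq_abs]
  have hlr : (ξ 0) ^ 2 + (ξ 1) ^ 2 + (ξ 2) ^ 2 + m ^ 2 = l ^ 2 := by
    rw [hldef, lambdaPlus, Real.sq_sqrt (by positivity), hnorm]
  have h : ((ξ 0 : ℝ) : ℂ) ^ 2 + ((ξ 1 : ℝ) : ℂ) ^ 2 + ((ξ 2 : ℝ) : ℂ) ^ 2 + (m : ℂ) ^ 2
      = ((l : ℝ) : ℂ) ^ 2 := by exact_mod_cast congrArg (Complex.ofReal) hlr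
  have hr2 : r ^ 2 * (2 * (l ^ 2 + m * l)) = 1 := by
    have h2 : (Real.sqrt 2 * Real.sqrt (l ^ 2 + m * l)) ^ 2 = 2 * (l ^ 2 + m * l) := by
      rw [mul_pow, Real.sq_sqrt (by norm_num), Real.sq_sqrt hpos.le]
    rw [hrdef, ← h2, ← mul_pow, inv_mul_cancel₀ (by positivity), one_pow]
  have hrc : ((r : ℝ) : ℂ) ^ 2 * (2 * (((l : ℝ) : ℂ) ^ 2 + (m : ℂ) * ((l : ℝ) : ℂ))) = 1 := by
    exact_mod_cast congrArg (Complex.ofReal) hr2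
  set W : Matrix (Fin 4) (Fin 4) ℂ :=
    !![((l + m : ℝ) : ℂ), 0, -(ξ 2 : ℂ), -(ξ 0 : ℂ) + I * (ξ 1 : ℂ);
       0, ((l + m : ℝ) : ℂ), -(ξ 0 : ℂ) - I * (ξ 1 : ℂ), (ξ 2 : ℂ);
       (ξ 2 : ℂ), (ξ 0 : ℂ) - I * (ξ 1 : ℂ), ((l + m : ℝ) : ℂ), 0;
       (ξ 0 : ℂ) + I * (ξ 1 : ℂ), -(ξ 2 : ℂ), 0, ((l + m : ℝ) : ℂ)] with hWdef
  set V : Matrix (Fin 4) (Fin 4) ℂ :=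
    !![((l + m : ℝ) : ℂ), 0, (ξ 2 : ℂ), (ξ 0 : ℂ) - I * (ξ 1 : ℂ);
       0, ((l + m : ℝ) : ℂ), (ξ 0 : ℂ) + I * (ξ 1 : ℂ), -(ξ 2 : ℂ);
       -(ξ 2 : ℂ), -(ξ 0 : ℂ) + I * (ξ 1 : ℂ), ((l + m : ℝ) : ℂ), 0;
       -(ξ 0 : ℂ) - I * (ξ 1 : ℂ), (ξ 2 : ℂ), 0, ((l + m : ℝ) : ℂ)] with hVdef
  have hU : diracU m ξ = ((r : ℝ) : ℂ) • W := rfl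
  have hUH : (diracU m ξ)ᴴ = ((r : ℝ) : ℂ) • V := by
    rw [hU, Matrix.conjTranspose_smul]
    congr 1
    · simp [Complex.star_def, Complex.conj_ofReal]
    · ext i j
      fin_cases i <;> fin_cases j <;>
        simp [hWdef, hVdef, Matrix.conjTranspose_apply, Complex.star_def, map_add, map_sub,
          _root_.map_mul, Complex.conj_I, Complex.conj_ofReal] <;> ring
  have hN : (((2 * (l ^ 2 + m * l) : ℝ)) : ℂ)
      = 2 * (((l : ℝ) : ℂ) ^ 2 + (m : ℂ) * ((l : ℝ) : ℂ)) := by push_cast; ring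
  have hVW : V * W = (((2 * (l ^ 2 + m * l) : ℝ)) : ℂ) • (1 : Matrix (Fin 4) (Fin 4) ℂ) := by
    ext i j
    fin_cases i <;> fin_cases j <;>
      simp [hWdef, hVdef, Matrix.mul_apply, Fin.sum_univ_four, Matrix.one_apply] <;>
      push_cast <;>
      first
        | linear_combination h - ((ξ 1 : ℝ) : ℂ) ^ 2 * Complex.I_sq
        | ring
  have hWV : W * V = (((2 * (l ^ 2 + m * l) : ℝ)) : ℂ) • (1 : Matrix (Fin 4) (Fin 4) ℂ) := by
    ext i j
    fin_cases i <;> fin_cases j <;>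
      simp [hWdef, hVdef, Matrix.mul_apply, Fin.sum_univ_four, Matrix.one_apply] <;>
      push_cast <;>
      first
        | linear_combination h - ((ξ 1 : ℝ) : ℂ) ^ 2 * Complex.I_sq
        | ring
  have hscal : ((r : ℝ) : ℂ) * ((r : ℝ) : ℂ) * (((2 * (l ^ 2 + m * l) : ℝ)) : ℂ) = 1 := by
    rw [hN]; linear_combination hrc
  have hVMW : V * diracSymbol m ξ * W
      = (((2 * (l ^ 2 + m * l) : ℝ)) : ℂ) •
        Matrix.diagonal ![((l : ℝ) : ℂ), ((l : ℝ) : ℂ), (((-l : ℝ)) : ℂ), (((-l : ℝ)) : ℂ)] := by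
    ext i j
    fin_cases i <;> fin_cases j <;>
      simp [hWdef, hVdef, diracSymbol, diracAlpha1, diracAlpha2, diracAlpha3, diracBeta,
        Matrix.mul_apply, Fin.sum_univ_four, Matrix.diagonal_apply] <;>
      push_cast <;>
      first
        | linear_combination ((m : ℂ) + 2 * ((l : ℝ) : ℂ)) * h
            + (-(((ξ 1 : ℝ) : ℂ) ^ 2 * (m : ℂ)) - 2 * ((l : ℝ) : ℂ) * ((ξ 1 : ℝ) : ℂ) ^ 2)
              * Complex.I_sq
        | linear_combination (-(m : ℂ) - 2 * ((l : ℝ) : ℂ)) * h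
            + (((ξ 1 : ℝ) : ℂ) ^ 2 * (m : ℂ) + 2 * ((l : ℝ) : ℂ) * ((ξ 1 : ℝ) : ℂ) ^ 2)
              * Complex.I_sq
        | linear_combination (-(ξ 2 : ℂ)) * h + ((ξ 1 : ℝ) : ℂ) ^ 2 * (ξ 2 : ℂ) * Complex.I_sq
        | linear_combination (ξ 2 : ℂ) * h - ((ξ 1 : ℝ) : ℂ) ^ 2 * (ξ 2 : ℂ) * Complex.I_sq
        | linear_combination (-(ξ 0 : ℂ) + I * (ξ 1 : ℂ)) * h
            + ((ξ 0 : ℂ) * ((ξ 1 : ℝ) : ℂ) ^ 2 - I * ((ξ 1 : ℝ) : ℂ) ^ 3) * Complex.I_sq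
        | linear_combination (-(ξ 0 : ℂ) - I * (ξ 1 : ℂ)) * h
            + ((ξ 0 : ℂ) * ((ξ 1 : ℝ) : ℂ) ^ 2 + I * ((ξ 1 : ℝ) : ℂ) ^ 3) * Complex.I_sq
        | ring
  refine ⟨?_, ?_, ?_⟩
  · rw [hUH, hU, Matrix.smul_mul, Matrix.mul_smul, hVW, smul_smul, smul_smul, hscal, one_smul]
  · rw [hUH, hU, Matrix.smul_mul, Matrix.mul_smul, hWV, smul_smul, smul_smul, hscal, one_smul]
  · rw [hUH, hU, Matrix.smul_mul, Matrix.smul_mul, Matrix.mul_smul, smul_smul, hVMW, smul_smul,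
      hscal, one_smul]


end
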